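/- Let q ≥ 1 and let a_1,…,a_q, b_1,…,b_q be positive reals such that for each i = 1,…,q the elementary symmetric polynomial inequality e_i(b_1,…,b_q) ≥ e_i(a_1,…,a_q) holds. Then for every natural number n, the ratio f_{n+1}/f_n ≤ 1, where f_n = ∏_{i=1}^q (a_i)_n / (b_i)_n and (a)_n denotes the rising factorial. In particular f_n ≤ f_1 for all n ≥ 1. -/

import Mathlib

open Finset Real MeasureTheory

noncomputable def rise (a : ℝ) (n : ℕ) : ℝ := ∏ k ∈ Finset.range n, (a + k)

noncomputable def esym {q : ℕ} (k : ℕ) (a : Fin q → ℝ) : ℝ :=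
  ∑ s ∈ Finset.powersetCard k (Finset.univ : Finset (Fin q)), ∏ i ∈ s, a i

lemma prod_add_esym {q : ℕ} (a : Fin q → ℝ) (c : ℝ) :
    ∏ i, (a i + c) = ∑ k ∈ Finset.range (q+1), esym k a * c^(q-k) := by
  rw [Finset.prod_add, Finset.sum_powerset]
  simp only [Finset.card_univ, Fintype.card_fin]
  refine Finset.sum_congr rfl fun k hk => ?_
  rw [esym, Finset.sum_mul]
  refine Finset.sum_congr rfl fun t ht => ?_
  rw [Finset.mem_powersetCard] at ht
  rw [Finset.prod_const, Finset.card_sdiff_of_subset ht.1, Finset.card_univ, Fintype.card_fin, ht.2]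

lemma rise_pos {a : ℝ} (ha : 0 < a) (n : ℕ) : 0 < rise a n :=
  Finset.prod_pos fun k _ => by positivity

theorem stmt0 (q : ℕ) (hq : 1 ≤ q) (a b : Fin q → ℝ)
    (ha : ∀ i, 0 < a i) (hb : ∀ i, 0 < b i)
    (he : ∀ i : ℕ, 1 ≤ i → i ≤ q → esym i a ≤ esym i b)
    (f : ℕ → ℝ)
    (hf : ∀ n, f n = (∏ i, rise (a i) n) / (∏ i, rise (b i) n)) :
    (∀ n : ℕ, f (n + 1) / f n ≤ 1) ∧ (∀ n : ℕ, 1 ≤ n → f n ≤ f 1) := by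
  have hpa : ∀ n, 0 < ∏ i, rise (a i) n := fun n =>
    Finset.prod_pos fun i _ => rise_pos (ha i) n
  have hpb : ∀ n, 0 < ∏ i, rise (b i) n := fun n =>
    Finset.prod_pos fun i _ => rise_pos (hb i) n
  have hfpos : ∀ n, 0 < f n := fun n => by rw [hf n]; exact div_pos (hpa n) (hpb n)
  have hkey : ∀ n : ℕ, ∏ i, (a i + (n : ℝ)) ≤ ∏ i, (b i + (n : ℝ)) := by
    intro n
    rw [prod_add_esym, prod_add_esym]
    refine Finset.sum_le_sum fun k hk => ?_
    rcases Nat.eq_zero_or_pos k with rfl | hk1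
    · have : esym 0 a = esym 0 b := by simp [esym]
      rw [this]
    · have hkq : k ≤ q := Nat.lt_succ_iff.mp (Finset.mem_range.mp hk)
      exact mul_le_mul_of_nonneg_right (he k hk1 hkq) (by positivity)
  have hstep : ∀ n : ℕ, f (n + 1) ≤ f n := by
    intro n
    rw [hf n, hf (n + 1)]
    have ha1 : ∏ i, rise (a i) (n + 1) = (∏ i, rise (a i) n) * ∏ i, (a i + n) := by
      rw [← Finset.prod_mul_distrib]
      exact Finset.prod_congr rfl fun i _ => Finset.prod_range_succ _ _
    have hb1 : ∏ i, rise (b i) (n + 1) = (∏ i, rise (b i) n) * ∏ i, (b i + n) := by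
      rw [← Finset.prod_mul_distrib]
      exact Finset.prod_congr rfl fun i _ => Finset.prod_range_succ _ _
    have hpbn : 0 < ∏ i, (b i + (n : ℝ)) :=
      Finset.prod_pos fun i _ => by have := hb i; positivity
    rw [ha1, hb1, div_le_div_iff₀ (mul_pos (hpb n) hpbn) (hpb n)]
    calc (∏ i, rise (a i) n) * (∏ i, (a i + (n:ℝ))) * ∏ i, rise (b i) n
        ≤ (∏ i, rise (a i) n) * (∏ i, (b i + (n:ℝ))) * ∏ i, rise (b i) n :=
          mul_le_mul_of_nonneg_right
            (mul_le_mul_of_nonneg_left (hkey n) (hpa n).le) (hpb n).le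
      _ = (∏ i, rise (a i) n) * ((∏ i, rise (b i) n) * ∏ i, (b i + (n:ℝ))) := by ring
  constructor
  · intro n
    rw [div_le_one (hfpos n)]
    exact hstep n
  · intro n hn
    induction n with
    | zero => omega
    | succ m ih =>
      rcases Nat.eq_zero_or_pos m with rfl | hm
      · exact le_refl _
      · exact le_trans (hstep m) (ih hm)
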